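/- arXiv:2403.19455 — 3 statements merged into one kernel-verified Lean document; each statement's English description precedes it below -/
import Mathlib

section
/- Fix n ∈ ℕ and parameters μ, λ₁,…,λₙ ∈ C¹([0,1];ℝ) with μ(x) > 0 and λᵢ(x) > 0 for all x, σ_{i,j}, Wᵢ, θᵢ ∈ C([0,1];ℝ), qᵢ ∈ ℝ for i,j = 1,…,n. Let k¹,…,kⁿ⁺¹ : 𝒯 → ℝ be C¹ functions satisfying the n+1 kernel equations with these parameters. Define the step functions λⁿ(x,y) = λᵢ(x), Wⁿ(x,y) = Wᵢ(x), θⁿ(x,y) = θᵢ(x), qⁿ(y) = qᵢ for y ∈ Iᵢ, σⁿ(x,y,η) = σ_{i,j}(x) for (y,η) ∈ Iᵢ×Iⱼ, and kⁿ(x,ξ,y) = kⁱ(x,ξ) for y ∈ Iᵢ. Then for every i = 1,…,n, every y ∈ Iᵢ and all (x,ξ) ∈ 𝒯: (i) μ(x)∂ₓkⁿ(x,ξ,y) − λⁿ(ξ,y)∂_ξkⁿ(x,ξ,y) − θⁿ(ξ,y)kⁿ⁺¹(x,ξ) = λᵢ′(ξ)kⁿ(x,ξ,y) + ∫₀¹σⁿ(ξ,η,y)kⁿ(x,ξ,η)dη;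 (ii) μ(x)∂ₓkⁿ⁺¹(x,ξ) + μ(ξ)∂_ξkⁿ⁺¹(x,ξ) = −μ′(ξ)kⁿ⁺¹(x,ξ) + ∫₀¹Wⁿ(ξ,y)kⁿ(x,ξ,y)dy; (iii) kⁿ(x,x,y) = −θⁿ(x,y)/(λⁿ(x,y)+μ(x)) for all x ∈ [0,1]; (iv) μ(0)kⁿ⁺¹(x,0) = ∫₀¹qⁿ(y)λⁿ(0,y)kⁿ(x,0,y)dy for all x ∈ [0,1]. That is, (kⁿ, kⁿ⁺¹) satisfies the continuum kernel equations with the step parameters λⁿ, μ, σⁿ, θⁿ, Wⁿ, qⁿ for almost every y ∈ [0,1]. -/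
open MeasureTheory Set


private lemma ceil_step (n j : ℕ) (hn : 1 ≤ n) (η : ℝ)
    (h1 : (j : ℝ) / n < η) (h2 : η ≤ ((j : ℝ) + 1) / n) :
    (⌈(n : ℝ) * η⌉).toNat = j + 1 := by
  have hn' : (0 : ℝ) < n := by exact_mod_cast hn
  have hc : ⌈(n : ℝ) * η⌉ = ((j : ℤ) + 1) := by
    rw [Int.ceil_eq_iff]
    push_cast
    constructor
    · have := (div_lt_iff₀ hn').mp h1
      nlinarith
    · have := (le_div_iff₀ hn').mp h2
      nlinarith
  rw [hc]
  omega

private lemma step_int_piece (n : ℕ) (hn : 1 ≤ n) (f : ℕ → ℝ) (j : ℕ) :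
    ∫ η in ((j : ℝ) / n)..(((j : ℝ) + 1) / n), f (⌈(n : ℝ) * η⌉).toNat
      = (1 / n : ℝ) * f (j + 1) := by
  have hn' : (0 : ℝ) < n := by exact_mod_cast hn
  have hle : (j : ℝ) / n ≤ ((j : ℝ) + 1) / n := by
    gcongr
    linarith
  rw [intervalIntegral.integral_of_le hle,
    setIntegral_congr_fun measurableSet_Ioc
      (fun η hη => by
        show f (⌈(n : ℝ) * η⌉).toNat = (fun _ : ℝ => f (j + 1)) η
        rw [ceil_step n j hn η hη.1 hη.2]),
    setIntegral_const]
  rw [measureReal_def, Real.volume_Ioc]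
  rw [ENNReal.toReal_ofReal (by linarith)]
  have : ((j : ℝ) + 1) / n - (j : ℝ) / n = 1 / n := by
    field_simp
    ring
  rw [this, smul_eq_mul]

private lemma step_integral (n : ℕ) (hn : 1 ≤ n) (f : ℕ → ℝ) :
    ∫ η in (0:ℝ)..1, f (⌈(n : ℝ) * η⌉).toNat
      = (1 / n : ℝ) * ∑ j ∈ Finset.Icc 1 n, f j := by
  have hn' : (0 : ℝ) < n := by exact_mod_cast hn
  have hint : ∀ k : ℕ, k < n → IntervalIntegrable
      (fun η => f (⌈(n : ℝ) * η⌉).toNat) MeasureTheory.volume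
      ((k : ℝ) / n) (((k : ℝ) + 1) / n) := by
    intro k _
    have hle : (k : ℝ) / n ≤ ((k : ℝ) + 1) / n := by gcongr; linarith
    rw [intervalIntegrable_iff_integrableOn_Ioc_of_le hle]
    refine ((MeasureTheory.integrableOn_const_iff (by finiteness)).mpr
        (Or.inr measure_Ioc_lt_top) :
        MeasureTheory.IntegrableOn (fun _ : ℝ => f (k + 1)) _ _).congr_fun
      (fun η hη => ?_) measurableSet_Ioc
    rw [ceil_step n k hn η hη.1 hη.2]
  have hadj := intervalIntegral.sum_integral_adjacent_intervals
    (a := fun k : ℕ => (k : ℝ) / n) (n := n)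
    (fun k hk => by
      have := hint k hk
      push_cast
      convert this using 2 <;> push_cast <;> ring)
  simp only [Nat.cast_zero, zero_div] at hadj
  have h1 : (n : ℝ) / n = 1 := div_self (ne_of_gt hn')
  rw [h1] at hadj
  rw [← hadj]
  rw [Finset.sum_congr rfl (fun k _ => by
    push_cast
    exact step_int_piece n hn f k)]
  rw [← Finset.mul_sum]
  congr 1
  rw [show Finset.Icc 1 n = Finset.Ico 1 (n + 1) by
    rw [Finset.Ico_add_one_right_eq_Icc]]
  rw [Finset.sum_Ico_eq_sum_range]
  simp [add_comm]

/-- If the C¹ kernels `k¹,…,kⁿ⁺¹` solve the n+1 kernel equations,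
then the step functions `kⁿ(x,ξ,y) = kⁱ(x,ξ)` for `y ∈ Iᵢ = ((i−1)/n, i/n]`
(realized via `i = ⌈n·y⌉`), together with `kⁿ⁺¹`, satisfy the continuum kernel
equations with the step parameters `λⁿ, μ, σⁿ, θⁿ, Wⁿ, qⁿ`. -/
theorem stmt_1 (n : ℕ) (hn : 1 ≤ n)
    (μ : ℝ → ℝ) (lam : ℕ → ℝ → ℝ) (σ : ℕ → ℕ → ℝ → ℝ) (W θ : ℕ → ℝ → ℝ) (q : ℕ → ℝ)
    (hμ : ContDiffOn ℝ 1 μ (Set.Icc 0 1))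
    (hμpos : ∀ x ∈ Set.Icc (0:ℝ) 1, 0 < μ x)
    (hlam : ∀ i ∈ Finset.Icc 1 n, ContDiffOn ℝ 1 (lam i) (Set.Icc 0 1))
    (hlampos : ∀ i ∈ Finset.Icc 1 n, ∀ x ∈ Set.Icc (0:ℝ) 1, 0 < lam i x)
    (hσ : ∀ i ∈ Finset.Icc 1 n, ∀ j ∈ Finset.Icc 1 n,
      ContinuousOn (σ i j) (Set.Icc 0 1))
    (hW : ∀ i ∈ Finset.Icc 1 n, ContinuousOn (W i) (Set.Icc 0 1))
    (hθ : ∀ i ∈ Finset.Icc 1 n, ContinuousOn (θ i) (Set.Icc 0 1))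
    (kk : ℕ → ℝ → ℝ → ℝ) (kb : ℝ → ℝ → ℝ)
    (hkkC1 : ∀ i ∈ Finset.Icc 1 n, ContDiffOn ℝ 1
      (fun pt : ℝ × ℝ => kk i pt.1 pt.2)
      {pt : ℝ × ℝ | 0 ≤ pt.2 ∧ pt.2 ≤ pt.1 ∧ pt.1 ≤ 1})
    (hkbC1 : ContDiffOn ℝ 1 (fun pt : ℝ × ℝ => kb pt.1 pt.2)
      {pt : ℝ × ℝ | 0 ≤ pt.2 ∧ pt.2 ≤ pt.1 ∧ pt.1 ≤ 1})
    -- the n+1 kernel equations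
    (heq1 : ∀ i ∈ Finset.Icc 1 n, ∀ x ξ : ℝ, 0 ≤ ξ → ξ ≤ x → x ≤ 1 →
      μ x * deriv (fun x' => kk i x' ξ) x - lam i ξ * deriv (fun ξ' => kk i x ξ') ξ
        = deriv (lam i) ξ * kk i x ξ
          + (1 / n : ℝ) * ∑ j ∈ Finset.Icc 1 n, σ j i ξ * kk j x ξ
          + θ i ξ * kb x ξ)
    (heq2 : ∀ x ξ : ℝ, 0 ≤ ξ → ξ ≤ x → x ≤ 1 →
      μ x * deriv (fun x' => kb x' ξ) x + μ ξ * deriv (fun ξ' => kb x ξ') ξ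
        = -deriv μ ξ * kb x ξ
          + (1 / n : ℝ) * ∑ j ∈ Finset.Icc 1 n, W j ξ * kk j x ξ)
    (hbc1 : ∀ i ∈ Finset.Icc 1 n, ∀ x ∈ Set.Icc (0:ℝ) 1,
      kk i x x = -θ i x / (lam i x + μ x))
    (hbc2 : ∀ x ∈ Set.Icc (0:ℝ) 1,
      μ 0 * kb x 0 = (1 / n : ℝ) * ∑ j ∈ Finset.Icc 1 n, q j * lam j 0 * kk j x 0) :
    ∀ i ∈ Finset.Icc 1 n, ∀ y ∈ Set.Ioc (((i : ℝ) - 1) / n) ((i : ℝ) / n),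
      -- (i)
      (∀ x ξ : ℝ, 0 ≤ ξ → ξ ≤ x → x ≤ 1 →
        μ x * deriv (fun x' => kk (⌈(n : ℝ) * y⌉).toNat x' ξ) x
          - lam (⌈(n : ℝ) * y⌉).toNat ξ
            * deriv (fun ξ' => kk (⌈(n : ℝ) * y⌉).toNat x ξ') ξ
          - θ (⌈(n : ℝ) * y⌉).toNat ξ * kb x ξ
        = deriv (lam i) ξ * kk (⌈(n : ℝ) * y⌉).toNat x ξ
          + ∫ η in (0:ℝ)..1, σ (⌈(n : ℝ) * η⌉).toNat (⌈(n : ℝ) * y⌉).toNat ξ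
              * kk (⌈(n : ℝ) * η⌉).toNat x ξ) ∧
      -- (ii)
      (∀ x ξ : ℝ, 0 ≤ ξ → ξ ≤ x → x ≤ 1 →
        μ x * deriv (fun x' => kb x' ξ) x + μ ξ * deriv (fun ξ' => kb x ξ') ξ
        = -deriv μ ξ * kb x ξ
          + ∫ y' in (0:ℝ)..1, W (⌈(n : ℝ) * y'⌉).toNat ξ
              * kk (⌈(n : ℝ) * y'⌉).toNat x ξ) ∧
      -- (iii)
      (∀ x ∈ Set.Icc (0:ℝ) 1,
        kk (⌈(n : ℝ) * y⌉).toNat x x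
          = -θ (⌈(n : ℝ) * y⌉).toNat x / (lam (⌈(n : ℝ) * y⌉).toNat x + μ x)) ∧
      -- (iv)
      (∀ x ∈ Set.Icc (0:ℝ) 1,
        μ 0 * kb x 0 = ∫ y' in (0:ℝ)..1, q (⌈(n : ℝ) * y'⌉).toNat
          * lam (⌈(n : ℝ) * y'⌉).toNat 0 * kk (⌈(n : ℝ) * y'⌉).toNat x 0) := by
  intro i hi y hy
  have hn' : (0 : ℝ) < n := by exact_mod_cast hn
  obtain ⟨hi1, hi2⟩ := Finset.mem_Icc.mp hi
  have hcast : ((i : ℝ) - 1) = ((i - 1 : ℕ) : ℝ) := by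
    have : (1 : ℕ) ≤ i := hi1
    push_cast [this]
    ring
  have hcy : (⌈(n : ℝ) * y⌉).toNat = i := by
    have h1 : ((i - 1 : ℕ) : ℝ) / n < y := by rw [← hcast]; exact hy.1
    have h2 : y ≤ (((i - 1 : ℕ) : ℝ) + 1) / n := by
      rw [← hcast]
      have : (i : ℝ) - 1 + 1 = i := by ring
      rw [this]
      exact hy.2
    rw [ceil_step n (i - 1) hn y h1 h2]
    omega
  refine ⟨?_, ?_, ?_, ?_⟩
  · intro x ξ h0 h1 h2
    rw [hcy]
    have hstep : (∫ η in (0:ℝ)..1,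
        σ (⌈(n : ℝ) * η⌉).toNat i ξ * kk (⌈(n : ℝ) * η⌉).toNat x ξ)
        = (1 / n : ℝ) * ∑ j ∈ Finset.Icc 1 n, σ j i ξ * kk j x ξ :=
      step_integral n hn (fun j => σ j i ξ * kk j x ξ)
    rw [hstep]
    have h := heq1 i hi x ξ h0 h1 h2
    linarith
  · intro x ξ h0 h1 h2
    have hstep : (∫ y' in (0:ℝ)..1,
        W (⌈(n : ℝ) * y'⌉).toNat ξ * kk (⌈(n : ℝ) * y'⌉).toNat x ξ)
        = (1 / n : ℝ) * ∑ j ∈ Finset.Icc 1 n, W j ξ * kk j x ξ :=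
      step_integral n hn (fun j => W j ξ * kk j x ξ)
    rw [hstep]
    exact heq2 x ξ h0 h1 h2
  · intro x hx
    rw [hcy]
    exact hbc1 i hi x hx
  · intro x hx
    have hstep : (∫ y' in (0:ℝ)..1,
        q (⌈(n : ℝ) * y'⌉).toNat * lam (⌈(n : ℝ) * y'⌉).toNat 0
          * kk (⌈(n : ℝ) * y'⌉).toNat x 0)
        = (1 / n : ℝ) * ∑ j ∈ Finset.Icc 1 n, q j * lam j 0 * kk j x 0 :=
      step_integral n hn (fun j => q j * lam j 0 * kk j x 0)
    rw [hstep]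
    exact hbc2 x hx
end

section
/- Let n ∈ ℕ, M ≥ 0, and let k¹,…,kⁿ⁺¹ : 𝒯 → ℝ be continuous with |kⁱ(x,ξ)| ≤ M for all (x,ξ) ∈ 𝒯 and all i = 1,…,n+1. Given α¹,…,αⁿ, β ∈ L²([0,1];ℝ), define w(x) = β(x) + ∫₀ˣ ((1/n)∑_{i=1}^n kⁱ(x,ξ)αⁱ(ξ) + kⁿ⁺¹(x,ξ)β(ξ)) dξ. Then ‖(α,w)‖_E ≤ (1+2M)‖(α,β)‖_E, where (α,w) has the same first n components α¹,…,αⁿ and last component w. -/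
open MeasureTheory Set

lemma aux_l1 (f : ℝ → ℝ) (hf : MemLp f 2 (volume.restrict (Set.Icc (0:ℝ) 1))) :
    ∫ x in (0:ℝ)..1, |f x| ≤ Real.sqrt (∫ x in (0:ℝ)..1, f x ^ 2) := by
  have hf' : MemLp f 2 (volume.restrict (Set.Ioc (0:ℝ) 1)) :=
    hf.mono_measure (Measure.restrict_mono Set.Ioc_subset_Icc_self le_rfl)
  have h2 : (ENNReal.ofReal 2) = (2 : ENNReal) := by norm_num
  have hhold := integral_mul_le_Lp_mul_Lq_of_nonneg (μ := volume.restrict (Set.Ioc (0:ℝ) 1))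
    (p := 2) (q := 2) Real.HolderConjugate.two_two
    (f := fun x => |f x|) (g := fun _ => (1:ℝ))
    (Filter.Eventually.of_forall fun x => abs_nonneg _)
    (Filter.Eventually.of_forall fun x => zero_le_one)
    (h2 ▸ hf'.abs) (h2 ▸ memLp_const 1)
  simp only [mul_one] at hhold
  rw [intervalIntegral.integral_of_le zero_le_one, intervalIntegral.integral_of_le zero_le_one]
  have e1 : ∫ x in Set.Ioc (0:ℝ) 1, |f x| ^ (2:ℝ) = ∫ x in Set.Ioc (0:ℝ) 1, f x ^ 2 := by
    refine integral_congr_ae (Filter.Eventually.of_forall fun x => ?_)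
    rw [show (2:ℝ) = ((2:ℕ):ℝ) by norm_num]
    show |f x| ^ ((2:ℕ):ℝ) = f x ^ 2
    rw [Real.rpow_natCast, sq_abs]
  have e2 : ∫ _x in Set.Ioc (0:ℝ) 1, (1:ℝ) ^ (2:ℝ) = 1 := by
    simp [Real.volume_Ioc]
  rw [e1, e2, Real.one_rpow, mul_one] at hhold
  calc ∫ x in Set.Ioc (0:ℝ) 1, |f x| ≤ (∫ x in Set.Ioc (0:ℝ) 1, f x ^ 2) ^ (1/2:ℝ) := hhold
    _ = Real.sqrt (∫ x in Set.Ioc (0:ℝ) 1, f x ^ 2) := (Real.sqrt_eq_rpow _).symm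

lemma aux_main (A β g : ℝ → ℝ) (C S : ℝ) (hC : 0 ≤ C) (hS : 0 ≤ S)
    (hAi : IntegrableOn A (Set.Ioc (0:ℝ) 1))
    (hβ2i : IntegrableOn (fun x => β x ^ 2) (Set.Ioc (0:ℝ) 1))
    (hβ1i : IntegrableOn (fun x => |β x|) (Set.Ioc (0:ℝ) 1))
    (hg : ∀ x ∈ Set.Icc (0:ℝ) 1, |g x| ≤ C)
    (hSsq : ∫ x in (0:ℝ)..1, (A x + β x ^ 2) = S ^ 2)
    (hβL1 : ∫ x in (0:ℝ)..1, |β x| ≤ S) :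
    Real.sqrt (∫ x in (0:ℝ)..1, (A x + (β x + g x) ^ 2)) ≤ S + C := by
  have hii : ∀ f : ℝ → ℝ, IntegrableOn f (Set.Ioc (0:ℝ) 1) → IntervalIntegrable f volume 0 1 :=
    fun f h => (intervalIntegrable_iff_integrableOn_Ioc_of_le zero_le_one).mpr h
  by_cases hW : IntervalIntegrable (fun x => A x + (β x + g x) ^ 2) volume 0 1
  · have hD : IntervalIntegrable
        (fun x => A x + β x ^ 2 + (2 * C * |β x| + C ^ 2)) volume 0 1 :=
      ((hii _ hAi).add (hii _ hβ2i)).add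
        (((hii _ hβ1i).const_mul (2*C)).add intervalIntegrable_const)
    have key : ∫ x in (0:ℝ)..1, (A x + (β x + g x) ^ 2)
        ≤ ∫ x in (0:ℝ)..1, (A x + β x ^ 2 + (2 * C * |β x| + C ^ 2)) := by
      apply intervalIntegral.integral_mono_on zero_le_one hW hD
      intro x hx
      have h1 := hg x hx
      have h2 : β x * g x ≤ |β x| * C :=
        calc β x * g x ≤ |β x * g x| := le_abs_self _
          _ = |β x| * |g x| := abs_mul _ _
          _ ≤ |β x| * C := mul_le_mul_of_nonneg_left h1 (abs_nonneg _)
      have h3 : g x ^ 2 ≤ C ^ 2 := by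
        rw [← sq_abs]; exact pow_le_pow_left₀ (abs_nonneg _) h1 2
      nlinarith [h2, h3]
    have key2 : ∫ x in (0:ℝ)..1, (A x + β x ^ 2 + (2 * C * |β x| + C ^ 2)) ≤ (S + C) ^ 2 := by
      rw [intervalIntegral.integral_add ((hii _ hAi).add (hii _ hβ2i))
          (((hii _ hβ1i).const_mul (2*C)).add intervalIntegrable_const),
        intervalIntegral.integral_add ((hii _ hβ1i).const_mul (2*C)) intervalIntegrable_const,
        intervalIntegral.integral_const_mul, intervalIntegral.integral_const]
      simp only [sub_zero, smul_eq_mul, one_mul]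
      have h4 : 2 * C * (∫ x in (0:ℝ)..1, |β x|) ≤ 2 * C * S :=
        mul_le_mul_of_nonneg_left hβL1 (by positivity)
      nlinarith [hSsq]
    calc Real.sqrt (∫ x in (0:ℝ)..1, (A x + (β x + g x) ^ 2))
        ≤ Real.sqrt ((S + C) ^ 2) := Real.sqrt_le_sqrt (key.trans key2)
      _ = S + C := Real.sqrt_sq (by positivity)
  · rw [intervalIntegral.integral_undef hW, Real.sqrt_zero]; positivity

/-- If the kernels `k¹,…,kⁿ⁺¹` are continuous on the triangle `𝒯`
and bounded by `M`, then the backstepping-type transformation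
`w(x) = β(x) + ∫₀ˣ ((1/n)∑ᵢ kⁱ(x,ξ)αⁱ(ξ) + kⁿ⁺¹(x,ξ)β(ξ)) dξ`
satisfies `‖(α,w)‖_E ≤ (1+2M)‖(α,β)‖_E`. -/
theorem stmt_11 (n : ℕ) (M : ℝ) (hM : 0 ≤ M)
    (kk : ℕ → ℝ → ℝ → ℝ) (kb : ℝ → ℝ → ℝ)
    (hkc : ∀ i ∈ Finset.Icc 1 n, ContinuousOn (fun p : ℝ × ℝ => kk i p.1 p.2)
      {p : ℝ × ℝ | 0 ≤ p.2 ∧ p.2 ≤ p.1 ∧ p.1 ≤ 1})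
    (hkbc : ContinuousOn (fun p : ℝ × ℝ => kb p.1 p.2)
      {p : ℝ × ℝ | 0 ≤ p.2 ∧ p.2 ≤ p.1 ∧ p.1 ≤ 1})
    (hkM : ∀ i ∈ Finset.Icc 1 n, ∀ x ξ : ℝ, 0 ≤ ξ → ξ ≤ x → x ≤ 1 → |kk i x ξ| ≤ M)
    (hkbM : ∀ x ξ : ℝ, 0 ≤ ξ → ξ ≤ x → x ≤ 1 → |kb x ξ| ≤ M)
    (α : ℕ → ℝ → ℝ) (β : ℝ → ℝ)
    (hα : ∀ i ∈ Finset.Icc 1 n, MemLp (α i) 2 (volume.restrict (Set.Icc (0:ℝ) 1)))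
    (hβ : MemLp β 2 (volume.restrict (Set.Icc (0:ℝ) 1))) :
    Real.sqrt (∫ x in (0:ℝ)..1,
        ((1 / n : ℝ) * ∑ i ∈ Finset.Icc 1 n, (α i x) ^ 2 +
          (β x + ∫ ξ in (0:ℝ)..x,
            ((1 / n : ℝ) * ∑ i ∈ Finset.Icc 1 n, kk i x ξ * α i ξ
              + kb x ξ * β ξ)) ^ 2)) ≤
      (1 + 2 * M) * Real.sqrt (∫ x in (0:ℝ)..1,
        ((1 / n : ℝ) * ∑ i ∈ Finset.Icc 1 n, (α i x) ^ 2 + (β x) ^ 2)) := by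
  classical
  have hii : ∀ f : ℝ → ℝ, IntegrableOn f (Set.Ioc (0:ℝ) 1) → IntervalIntegrable f volume 0 1 :=
    fun f h => (intervalIntegrable_iff_integrableOn_Ioc_of_le zero_le_one).mpr h
  have hmono : ∀ f : ℝ → ℝ, MemLp f 2 (volume.restrict (Set.Icc (0:ℝ) 1)) →
      MemLp f 2 (volume.restrict (Set.Ioc (0:ℝ) 1)) :=
    fun f h => h.mono_measure (Measure.restrict_mono Set.Ioc_subset_Icc_self le_rfl)
  have hβ' := hmono β hβ
  have hβ2i : IntegrableOn (fun x => β x ^ 2) (Set.Ioc (0:ℝ) 1) := hβ'.integrable_sq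
  have hβ1i : IntegrableOn (fun x => |β x|) (Set.Ioc (0:ℝ) 1) :=
    (hβ'.integrable one_le_two).abs
  have hα2i : ∀ i ∈ Finset.Icc 1 n, IntegrableOn (fun x => α i x ^ 2) (Set.Ioc (0:ℝ) 1) :=
    fun i hi => (hmono _ (hα i hi)).integrable_sq
  have hα1i : ∀ i ∈ Finset.Icc 1 n, IntegrableOn (fun x => |α i x|) (Set.Ioc (0:ℝ) 1) :=
    fun i hi => ((hmono _ (hα i hi)).integrable one_le_two).abs
  have hAi : IntegrableOn (fun x => (1 / n : ℝ) * ∑ i ∈ Finset.Icc 1 n, α i x ^ 2)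
      (Set.Ioc (0:ℝ) 1) := (integrable_finset_sum _ hα2i).const_mul _
  have hIS0 : 0 ≤ ∫ x in (0:ℝ)..1,
      ((1 / n : ℝ) * ∑ i ∈ Finset.Icc 1 n, (α i x) ^ 2 + (β x) ^ 2) :=
    intervalIntegral.integral_nonneg zero_le_one fun x _ => by positivity
  set S := Real.sqrt (∫ x in (0:ℝ)..1,
      ((1 / n : ℝ) * ∑ i ∈ Finset.Icc 1 n, (α i x) ^ 2 + (β x) ^ 2)) with hSdef
  have hS0 : 0 ≤ S := Real.sqrt_nonneg _
  have hSsq : ∫ x in (0:ℝ)..1,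
      ((1 / n : ℝ) * ∑ i ∈ Finset.Icc 1 n, (α i x) ^ 2 + (β x) ^ 2) = S ^ 2 :=
    (Real.sq_sqrt hIS0).symm
  have hsplit : ∫ x in (0:ℝ)..1,
      ((1 / n : ℝ) * ∑ i ∈ Finset.Icc 1 n, (α i x) ^ 2 + (β x) ^ 2)
      = (∫ x in (0:ℝ)..1, (1 / n : ℝ) * ∑ i ∈ Finset.Icc 1 n, α i x ^ 2)
        + ∫ x in (0:ℝ)..1, β x ^ 2 :=
    intervalIntegral.integral_add (hii _ hAi) (hii _ hβ2i)
  have hβint0 : 0 ≤ ∫ x in (0:ℝ)..1, β x ^ 2 :=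
    intervalIntegral.integral_nonneg zero_le_one fun x _ => sq_nonneg _
  have hAint0 : 0 ≤ ∫ x in (0:ℝ)..1, (1 / n : ℝ) * ∑ i ∈ Finset.Icc 1 n, α i x ^ 2 :=
    intervalIntegral.integral_nonneg zero_le_one fun x _ => by positivity
  have hβ2le : ∫ x in (0:ℝ)..1, β x ^ 2 ≤ S ^ 2 := by
    rw [← hSsq, hsplit]; linarith
  have hA2le : ∫ x in (0:ℝ)..1, (1 / n : ℝ) * ∑ i ∈ Finset.Icc 1 n, α i x ^ 2 ≤ S ^ 2 := by
    rw [← hSsq, hsplit]; linarith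
  have hβL1 : ∫ x in (0:ℝ)..1, |β x| ≤ S :=
    calc ∫ x in (0:ℝ)..1, |β x| ≤ Real.sqrt (∫ x in (0:ℝ)..1, β x ^ 2) := aux_l1 β hβ
      _ ≤ Real.sqrt (S ^ 2) := Real.sqrt_le_sqrt hβ2le
      _ = S := Real.sqrt_sq hS0
  -- L1 bound for the α's
  have hαL1 : (1 / n : ℝ) * ∑ i ∈ Finset.Icc 1 n, (∫ x in (0:ℝ)..1, |α i x|) ≤ S := by
    rcases Nat.eq_zero_or_pos n with hn | hn
    · subst hn; simpa using hS0
    · have hn' : (0:ℝ) < n := by exact_mod_cast hn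
      have hint0 : ∀ i, 0 ≤ ∫ x in (0:ℝ)..1, α i x ^ 2 :=
        fun i => intervalIntegral.integral_nonneg zero_le_one fun x _ => sq_nonneg _
      set b : ℕ → ℝ := fun i => Real.sqrt (∫ x in (0:ℝ)..1, α i x ^ 2) with hb
      have hT0 : 0 ≤ (1 / n : ℝ) * ∑ i ∈ Finset.Icc 1 n, b i :=
        mul_nonneg (by positivity) (Finset.sum_nonneg fun i _ => Real.sqrt_nonneg _)
      have step1 : (1 / n : ℝ) * ∑ i ∈ Finset.Icc 1 n, (∫ x in (0:ℝ)..1, |α i x|)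
          ≤ (1 / n : ℝ) * ∑ i ∈ Finset.Icc 1 n, b i :=
        mul_le_mul_of_nonneg_left
          (Finset.sum_le_sum fun i hi => aux_l1 (α i) (hα i hi)) (by positivity)
      have hcs := sq_sum_le_card_mul_sum_sq (s := Finset.Icc 1 n) (f := b)
      have hcard : (((Finset.Icc 1 n).card : ℕ) : ℝ) = (n : ℝ) := by
        simp [Nat.card_Icc]
      have hsum_sq : ∑ i ∈ Finset.Icc 1 n, b i ^ 2
          = ∑ i ∈ Finset.Icc 1 n, ∫ x in (0:ℝ)..1, α i x ^ 2 :=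
        Finset.sum_congr rfl fun i _ => Real.sq_sqrt (hint0 i)
      have hAeq : ∫ x in (0:ℝ)..1, (1 / n : ℝ) * ∑ i ∈ Finset.Icc 1 n, α i x ^ 2
          = (1 / n : ℝ) * ∑ i ∈ Finset.Icc 1 n, ∫ x in (0:ℝ)..1, α i x ^ 2 := by
        rw [intervalIntegral.integral_const_mul,
          intervalIntegral.integral_finset_sum fun i hi => hii _ (hα2i i hi)]
      have hT2 : ((1 / n : ℝ) * ∑ i ∈ Finset.Icc 1 n, b i) ^ 2 ≤ S ^ 2 := by
        have h6 : (1/n:ℝ)^2 * (∑ i ∈ Finset.Icc 1 n, b i)^2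
            ≤ (1/n:ℝ)^2 * ((n:ℝ) * ∑ i ∈ Finset.Icc 1 n, b i ^ 2) := by
          apply mul_le_mul_of_nonneg_left _ (by positivity)
          rw [← hcard]; exact_mod_cast hcs
        calc ((1 / n : ℝ) * ∑ i ∈ Finset.Icc 1 n, b i) ^ 2
            = (1/n:ℝ)^2 * (∑ i ∈ Finset.Icc 1 n, b i)^2 := by ring
          _ ≤ (1/n:ℝ)^2 * ((n:ℝ) * ∑ i ∈ Finset.Icc 1 n, b i ^ 2) := h6
          _ = (1/n:ℝ) * ∑ i ∈ Finset.Icc 1 n, b i ^ 2 := by field_simp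
          _ = ∫ x in (0:ℝ)..1, (1 / n : ℝ) * ∑ i ∈ Finset.Icc 1 n, α i x ^ 2 := by
              rw [hsum_sq, ← hAeq]
          _ ≤ S ^ 2 := hA2le
      have hTS : (1 / n : ℝ) * ∑ i ∈ Finset.Icc 1 n, b i ≤ S := by
        have h8 := Real.sqrt_le_sqrt hT2
        rwa [Real.sqrt_sq hT0, Real.sqrt_sq hS0] at h8
      exact step1.trans hTS
  -- integrability of the dominating function
  have hh1i : IntegrableOn
      (fun ξ => M * ((1 / n : ℝ) * ∑ i ∈ Finset.Icc 1 n, |α i ξ| + |β ξ|))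
      (Set.Ioc (0:ℝ) 1) :=
    (((integrable_finset_sum _ hα1i).const_mul _).add hβ1i).const_mul M
  -- pointwise bound on the transform integral
  have hg : ∀ x ∈ Set.Icc (0:ℝ) 1,
      |∫ ξ in (0:ℝ)..x, ((1 / n : ℝ) * ∑ i ∈ Finset.Icc 1 n, kk i x ξ * α i ξ
        + kb x ξ * β ξ)| ≤ 2 * M * S := by
    intro x hx
    by_cases hFi : IntervalIntegrable
        (fun ξ => (1 / n : ℝ) * ∑ i ∈ Finset.Icc 1 n, kk i x ξ * α i ξ + kb x ξ * β ξ)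
        volume 0 x
    · have hMh01 : IntervalIntegrable
          (fun ξ => M * ((1 / n : ℝ) * ∑ i ∈ Finset.Icc 1 n, |α i ξ| + |β ξ|))
          volume 0 1 := hii _ hh1i
      have hMh0x : IntervalIntegrable
          (fun ξ => M * ((1 / n : ℝ) * ∑ i ∈ Finset.Icc 1 n, |α i ξ| + |β ξ|))
          volume 0 x := by
        apply hMh01.mono_set
        rw [Set.uIcc_of_le hx.1, Set.uIcc_of_le zero_le_one]
        exact Set.Icc_subset_Icc le_rfl hx.2
      have hpt : ∀ ξ ∈ Set.Icc (0:ℝ) x,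
          |(1 / n : ℝ) * ∑ i ∈ Finset.Icc 1 n, kk i x ξ * α i ξ + kb x ξ * β ξ|
          ≤ M * ((1 / n : ℝ) * ∑ i ∈ Finset.Icc 1 n, |α i ξ| + |β ξ|) := by
        intro ξ hξ
        have hk : ∀ i ∈ Finset.Icc 1 n, |kk i x ξ * α i ξ| ≤ M * |α i ξ| := fun i hi => by
          rw [abs_mul]
          exact mul_le_mul_of_nonneg_right (hkM i hi x ξ hξ.1 hξ.2 hx.2) (abs_nonneg _)
        have hkb' : |kb x ξ * β ξ| ≤ M * |β ξ| := by
          rw [abs_mul]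
          exact mul_le_mul_of_nonneg_right (hkbM x ξ hξ.1 hξ.2 hx.2) (abs_nonneg _)
        calc |(1 / n : ℝ) * ∑ i ∈ Finset.Icc 1 n, kk i x ξ * α i ξ + kb x ξ * β ξ|
            ≤ |(1 / n : ℝ) * ∑ i ∈ Finset.Icc 1 n, kk i x ξ * α i ξ| + |kb x ξ * β ξ| :=
              abs_add_le _ _
          _ = (1 / n : ℝ) * |∑ i ∈ Finset.Icc 1 n, kk i x ξ * α i ξ| + |kb x ξ * β ξ| := by
              rw [abs_mul, abs_of_nonneg (by positivity : (0:ℝ) ≤ (1 / n : ℝ))]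
          _ ≤ (1 / n : ℝ) * (∑ i ∈ Finset.Icc 1 n, |kk i x ξ * α i ξ|) + M * |β ξ| :=
              add_le_add (mul_le_mul_of_nonneg_left (Finset.abs_sum_le_sum_abs _ _)
                (by positivity)) hkb'
          _ ≤ (1 / n : ℝ) * (∑ i ∈ Finset.Icc 1 n, M * |α i ξ|) + M * |β ξ| :=
              add_le_add (mul_le_mul_of_nonneg_left (Finset.sum_le_sum hk)
                (by positivity)) le_rfl
          _ = M * ((1 / n : ℝ) * ∑ i ∈ Finset.Icc 1 n, |α i ξ| + |β ξ|) := by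
              rw [← Finset.mul_sum]; ring
      calc |∫ ξ in (0:ℝ)..x, ((1 / n : ℝ) * ∑ i ∈ Finset.Icc 1 n, kk i x ξ * α i ξ
              + kb x ξ * β ξ)|
          ≤ ∫ ξ in (0:ℝ)..x,
              |(1 / n : ℝ) * ∑ i ∈ Finset.Icc 1 n, kk i x ξ * α i ξ + kb x ξ * β ξ| :=
            intervalIntegral.abs_integral_le_integral_abs hx.1
        _ ≤ ∫ ξ in (0:ℝ)..x, M * ((1 / n : ℝ) * ∑ i ∈ Finset.Icc 1 n, |α i ξ| + |β ξ|) :=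
            intervalIntegral.integral_mono_on hx.1 hFi.abs hMh0x hpt
        _ ≤ ∫ ξ in (0:ℝ)..1, M * ((1 / n : ℝ) * ∑ i ∈ Finset.Icc 1 n, |α i ξ| + |β ξ|) := by
            apply intervalIntegral.integral_mono_interval le_rfl hx.1 hx.2
              (Filter.Eventually.of_forall fun ξ => by positivity) hMh01
        _ = M * ((1 / n : ℝ) * ∑ i ∈ Finset.Icc 1 n, (∫ x in (0:ℝ)..1, |α i x|)
              + ∫ x in (0:ℝ)..1, |β x|) := by
            rw [intervalIntegral.integral_const_mul,
              intervalIntegral.integral_add (hii _ ((integrable_finset_sum _ hα1i).const_mul _))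
                (hii _ hβ1i),
              intervalIntegral.integral_const_mul,
              intervalIntegral.integral_finset_sum fun i hi => hii _ (hα1i i hi)]
        _ ≤ M * (S + S) :=
            mul_le_mul_of_nonneg_left (add_le_add hαL1 hβL1) hM
        _ = 2 * M * S := by ring
    · rw [intervalIntegral.integral_undef hFi, abs_zero]
      positivity
  have hmain := aux_main
    (fun x => (1 / n : ℝ) * ∑ i ∈ Finset.Icc 1 n, α i x ^ 2) β
    (fun x => ∫ ξ in (0:ℝ)..x, ((1 / n : ℝ) * ∑ i ∈ Finset.Icc 1 n, kk i x ξ * α i ξ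
      + kb x ξ * β ξ))
    (2 * M * S) S (by positivity) hS0 hAi hβ2i hβ1i hg hSsq hβL1
  have hfin : S + 2 * M * S = (1 + 2 * M) * S := by ring
  rw [← hfin]
  exact hmain
end

section
/- Define on [0,1]³ and [0,1]² the parameters μ(x) = 1, λ(x,y) = 1, σ(x,y,η) = x³(x+1)(y − 1/2)(η − 1/2), W(x,y) = x(x+1)eˣ(y − 1/2), θ(x,y) = −70 e^{35x/π²} y(y−1), q(y) = cos(2πy). Then the functions k(x,ξ,y) = 35 y(y−1) e^{35ξ/π²} and k̄(x,ξ) = 35/(2π²) satisfy, for all (x,ξ) ∈ 𝒯 and all y ∈ [0,1], the continuum kernel equations: μ(x)∂ₓk(x,ξ,y) − λ(ξ,y)∂_ξk(x,ξ,y) − θ(ξ,y)k̄(x,ξ) = ∂_ξλ(ξ,y)·k(x,ξ,y) + ∫₀¹σ(ξ,η,y)k(x,ξ,η)dη; μ(x)∂ₓk̄(x,ξ) + μ(ξ)∂_ξk̄(x,ξ) = −μ′(ξ)k̄(x,ξ) + ∫₀¹W(ξ,y)k(x,ξ,y)dy; k(x,x,y) = −θ(x,y)/(λ(x,y)+μ(x));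 and μ(0)k̄(x,0) = ∫₀¹q(y)λ(0,y)k(x,0,y)dy. -/
open MeasureTheory Set

lemma poly_int : ∫ η in (0:ℝ)..1, (η - 1/2) * (η * (η - 1)) = 0 := by
  have h : ∀ η ∈ Set.uIcc (0:ℝ) 1, HasDerivAt (fun t : ℝ => t^4/4 - t^3/2 + t^2/4)
      ((η - 1/2) * (η * (η - 1))) η := by
    intro η _
    have : HasDerivAt (fun t : ℝ => t^4/4 - t^3/2 + t^2/4)
        (4*η^3/4 - 3*η^2/2 + 2*η/4) η := by
      exact ((((hasDerivAt_pow 4 η).div_const 4).sub ((hasDerivAt_pow 3 η).div_const 2)).add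
        ((hasDerivAt_pow 2 η).div_const 4)).congr_deriv (by norm_num)
    convert this using 1; ring
  rw [intervalIntegral.integral_eq_sub_of_hasDerivAt h (by apply Continuous.intervalIntegrable; continuity)]
  norm_num

lemma trig_int : ∫ y in (0:ℝ)..1, Real.cos (2*Real.pi*y) * (35*(y*(y-1))) = 35/(2*Real.pi^2) := by
  have hpi := Real.pi_ne_zero
  have h : ∀ y ∈ Set.uIcc (0:ℝ) 1, HasDerivAt (fun t : ℝ =>
      35 * ((t^2/(2*Real.pi)) * Real.sin (2*Real.pi*t) + (t/(2*Real.pi^2)) * Real.cos (2*Real.pi*t)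
        - (1/(4*Real.pi^3)) * Real.sin (2*Real.pi*t)
        - ((t/(2*Real.pi)) * Real.sin (2*Real.pi*t) + (1/(4*Real.pi^2)) * Real.cos (2*Real.pi*t))))
      (Real.cos (2*Real.pi*y) * (35*(y*(y-1)))) y := by
    intro y _
    have hs : HasDerivAt (fun t : ℝ => Real.sin (2*Real.pi*t)) (Real.cos (2*Real.pi*y) * (2*Real.pi)) y := by
      exact ((Real.hasDerivAt_sin (2*Real.pi*y)).comp y ((hasDerivAt_id y).const_mul (2*Real.pi))).congr_deriv (by simp)
    have hc : HasDerivAt (fun t : ℝ => Real.cos (2*Real.pi*t)) (-Real.sin (2*Real.pi*y) * (2*Real.pi)) y := by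
      exact ((Real.hasDerivAt_cos (2*Real.pi*y)).comp y ((hasDerivAt_id y).const_mul (2*Real.pi))).congr_deriv (by simp)
    have h1 : HasDerivAt (fun t : ℝ => t^2/(2*Real.pi)) (2*y/(2*Real.pi)) y := by
      simpa using (hasDerivAt_pow 2 y).div_const (2*Real.pi)
    have h2 : HasDerivAt (fun t : ℝ => t/(2*Real.pi^2)) (1/(2*Real.pi^2)) y := by
      simpa only [id_eq] using (hasDerivAt_id y).div_const (2*Real.pi^2)
    have h3 : HasDerivAt (fun t : ℝ => t/(2*Real.pi)) (1/(2*Real.pi)) y := by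
      simpa only [id_eq] using (hasDerivAt_id y).div_const (2*Real.pi)
    have := ((((h1.mul hs).add (h2.mul hc)).sub (hs.const_mul (1/(4*Real.pi^3)))).sub
      ((h3.mul hs).add (hc.const_mul (1/(4*Real.pi^2))))).const_mul 35
    refine this.congr_deriv ?_
    field_simp
    ring
  rw [intervalIntegral.integral_eq_sub_of_hasDerivAt h (by apply Continuous.intervalIntegrable; continuity)]
  simp only [mul_one, mul_zero, Real.sin_two_pi, Real.cos_two_pi, Real.sin_zero,
    Real.cos_zero, one_pow, zero_pow, zero_div, zero_mul, mul_zero]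
  field_simp
  ring


/-- With the explicit parameters `μ ≡ 1`, `λ ≡ 1`,
`σ(x,y,η) = x³(x+1)(y−1/2)(η−1/2)`, `W(x,y) = x(x+1)eˣ(y−1/2)`,
`θ(x,y) = −70e^{35x/π²}y(y−1)`, `q(y) = cos(2πy)`, the functions
`k(x,ξ,y) = 35y(y−1)e^{35ξ/π²}` and `k̄(x,ξ) = 35/(2π²)` satisfy the continuum
kernel equations on the triangle `𝒯` for all `y ∈ [0,1]`. -/
theorem stmt_12 :
    let μ : ℝ → ℝ := fun _ => 1
    let lam : ℝ → ℝ → ℝ := fun _ _ => 1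
    let σ : ℝ → ℝ → ℝ → ℝ := fun x y η => x ^ 3 * (x + 1) * (y - 1 / 2) * (η - 1 / 2)
    let W : ℝ → ℝ → ℝ := fun x y => x * (x + 1) * Real.exp x * (y - 1 / 2)
    let θ : ℝ → ℝ → ℝ := fun x y => -70 * Real.exp (35 * x / Real.pi ^ 2) * y * (y - 1)
    let q : ℝ → ℝ := fun y => Real.cos (2 * Real.pi * y)
    let k : ℝ → ℝ → ℝ → ℝ := fun _ ξ y => 35 * y * (y - 1) * Real.exp (35 * ξ / Real.pi ^ 2)
    let kb : ℝ → ℝ → ℝ := fun _ _ => 35 / (2 * Real.pi ^ 2)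
    ∀ x ξ y : ℝ, 0 ≤ ξ → ξ ≤ x → x ≤ 1 → y ∈ Set.Icc (0:ℝ) 1 →
      (μ x * deriv (fun x' => k x' ξ y) x - lam ξ y * deriv (fun ξ' => k x ξ' y) ξ
          - θ ξ y * kb x ξ
        = deriv (fun ξ' => lam ξ' y) ξ * k x ξ y
          + ∫ η in (0:ℝ)..1, σ ξ η y * k x ξ η) ∧
      (μ x * deriv (fun x' => kb x' ξ) x + μ ξ * deriv (fun ξ' => kb x ξ') ξ
        = -deriv μ ξ * kb x ξ + ∫ y' in (0:ℝ)..1, W ξ y' * k x ξ y') ∧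
      (k x x y = -θ x y / (lam x y + μ x)) ∧
      (μ 0 * kb x 0 = ∫ y' in (0:ℝ)..1, q y' * lam 0 y' * k x 0 y') := by
  intro μ lam σ W θ q k kb x ξ y h0 hξ hx hy
  have hpi := Real.pi_ne_zero
  simp only [μ, lam, σ, W, θ, q, k, kb]
  refine ⟨?_, ?_, ?_, ?_⟩
  · have hd : HasDerivAt (fun ξ' => 35 * y * (y - 1) * Real.exp (35 * ξ' / Real.pi ^ 2))
        (35 * y * (y - 1) * (Real.exp (35 * ξ / Real.pi ^ 2) * (35 / Real.pi ^ 2))) ξ := by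
      have hin : HasDerivAt (fun ξ' : ℝ => 35 * ξ' / Real.pi ^ 2) (35 / Real.pi ^ 2) ξ := by
        simpa using ((hasDerivAt_id ξ).const_mul 35).div_const (Real.pi ^ 2)
      exact ((Real.hasDerivAt_exp _).comp ξ hin).const_mul _
    rw [hd.deriv]
    have hint : (∫ η in (0:ℝ)..1, ξ ^ 3 * (ξ + 1) * (η - 1/2) * (y - 1/2) *
        (35 * η * (η - 1) * Real.exp (35 * ξ / Real.pi ^ 2)))
        = ∫ η in (0:ℝ)..1, (ξ ^ 3 * (ξ + 1) * (y - 1/2) * (35 * Real.exp (35 * ξ / Real.pi ^ 2)))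
          * ((η - 1/2) * (η * (η - 1))) := by
      apply intervalIntegral.integral_congr
      intro η _; ring
    rw [hint, intervalIntegral.integral_const_mul, poly_int, mul_zero]
    simp only [deriv_const']
    field_simp
    ring
  · have hint : (∫ y' in (0:ℝ)..1, ξ * (ξ + 1) * Real.exp ξ * (y' - 1/2) *
        (35 * y' * (y' - 1) * Real.exp (35 * ξ / Real.pi ^ 2)))
        = ∫ y' in (0:ℝ)..1, (ξ * (ξ + 1) * Real.exp ξ * (35 * Real.exp (35 * ξ / Real.pi ^ 2)))
          * ((y' - 1/2) * (y' * (y' - 1))) := by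
      apply intervalIntegral.integral_congr
      intro y' _; ring
    rw [hint, intervalIntegral.integral_const_mul, poly_int, mul_zero]
    simp
  · field_simp
    ring
  · have hint : (∫ y' in (0:ℝ)..1, Real.cos (2 * Real.pi * y') * 1 *
        (35 * y' * (y' - 1) * Real.exp (35 * 0 / Real.pi ^ 2)))
        = ∫ y' in (0:ℝ)..1, Real.cos (2 * Real.pi * y') * (35 * (y' * (y' - 1))) := by
      apply intervalIntegral.integral_congr
      intro y' _
      simp only [mul_zero, zero_mul, zero_div, Real.exp_zero, mul_one]
      ring
    rw [hint, trig_int, one_mul]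
end
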